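/- Let a₁, a₂, …, aₙ be positive integers with gcd(a₁,…,aₙ) = 1, let d = gcd(a₂, …, aₙ) and write aⱼ = d·a'ⱼ for j ≥ 2. Then the Frobenius numbers satisfy F(⟨a₁, a₂, …, aₙ⟩) = d·F(⟨a₁, a'₂, …, a'ₙ⟩) + a₁·(d − 1). -/
import Mathlib


theorem stmt_18 (n : ℕ) (a₁ : ℕ) (a : Fin n → ℕ) (ha₁ : 0 < a₁)
    (ha : ∀ i, 0 < a i) (d : ℕ) (hd : d = Finset.univ.gcd a)
    (hgcd : Nat.gcd a₁ d = 1)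
    (F₁ F₂ : ℕ)
    (hF₁ : IsGreatest {x : ℕ | ¬ ∃ (l₀ : ℕ) (l : Fin n → ℕ),
      x = l₀ * a₁ + ∑ i, l i * a i} F₁)
    (hF₂ : IsGreatest {x : ℕ | ¬ ∃ (l₀ : ℕ) (l : Fin n → ℕ),
      x = l₀ * a₁ + ∑ i, l i * (a i / d)} F₂) :
    F₁ = d * F₂ + a₁ * (d - 1) := by
  rcases Nat.eq_zero_or_pos d with hd0 | hdpos
  · -- d = 0 forces a₁ = 1, making every natural representable; contradiction
    subst hd0
    rw [Nat.gcd_zero_right] at hgcd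
    exact absurd ⟨F₁, 0, by simp [hgcd]⟩ hF₁.1
  haveI : NeZero d := ⟨hdpos.ne'⟩
  have hdvd : ∀ i, d ∣ a i := fun i => hd ▸ Finset.gcd_dvd (Finset.mem_univ i)
  have hsum : ∀ l : Fin n → ℕ, d * ∑ i, l i * (a i / d) = ∑ i, l i * a i := by
    intro l
    rw [Finset.mul_sum]
    exact Finset.sum_congr rfl fun i _ => by
      rw [mul_left_comm, Nat.mul_div_cancel' (hdvd i)]
  -- key characterization of representability
  have key : ∀ x : ℕ, (∃ (l₀ : ℕ) (l : Fin n → ℕ), x = l₀ * a₁ + ∑ i, l i * a i) ↔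
      ∃ c, c < d ∧ ∃ y, (∃ (l₀ : ℕ) (l : Fin n → ℕ),
        y = l₀ * a₁ + ∑ i, l i * (a i / d)) ∧ x = c * a₁ + d * y := by
    intro x
    constructor
    · rintro ⟨l₀, l, rfl⟩
      refine ⟨l₀ % d, Nat.mod_lt _ hdpos, l₀ / d * a₁ + ∑ i, l i * (a i / d),
        ⟨l₀ / d, l, rfl⟩, ?_⟩
      have h1 : l₀ % d + d * (l₀ / d) = l₀ := Nat.mod_add_div l₀ d
      calc l₀ * a₁ + ∑ i, l i * a i
          = (l₀ % d + d * (l₀ / d)) * a₁ + d * ∑ i, l i * (a i / d) := by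
            rw [h1, hsum]
        _ = l₀ % d * a₁ + d * (l₀ / d * a₁ + ∑ i, l i * (a i / d)) := by ring
    · rintro ⟨c, hc, y, ⟨l₀, l, rfl⟩, rfl⟩
      refine ⟨c + d * l₀, l, ?_⟩
      calc c * a₁ + d * (l₀ * a₁ + ∑ i, l i * (a i / d))
          = (c + d * l₀) * a₁ + d * ∑ i, l i * (a i / d) := by ring
        _ = (c + d * l₀) * a₁ + ∑ i, l i * a i := by rw [hsum]
  have hu : IsUnit (a₁ : ZMod d) := by
    rw [ZMod.isUnit_iff_coprime]; exact hgcd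
  -- Step 1: d * F₂ + a₁ * (d - 1) is not representable
  have hnot : ¬ ∃ (l₀ : ℕ) (l : Fin n → ℕ),
      d * F₂ + a₁ * (d - 1) = l₀ * a₁ + ∑ i, l i * a i := by
    rw [key]
    rintro ⟨c, hc, y, hy, hx⟩
    have hcast : ((d * F₂ + a₁ * (d - 1) : ℕ) : ZMod d)
        = ((c * a₁ + d * y : ℕ) : ZMod d) := by exact_mod_cast congrArg _ hx
    push_cast at hcast
    rw [ZMod.natCast_self] at hcast
    simp only [zero_mul, zero_add, mul_zero, add_zero] at hcast
    -- hcast : ↑a₁ * ↑(d-1) = ↑c * ↑a₁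
    have hcd : (c : ZMod d) = ((d - 1 : ℕ) : ZMod d) := by
      apply hu.mul_right_cancel
      rw [← hcast, mul_comm]
    have hceq : c = d - 1 := by
      have h2 := (ZMod.natCast_eq_natCast_iff _ _ _).mp hcd
      unfold Nat.ModEq at h2
      rw [Nat.mod_eq_of_lt hc, Nat.mod_eq_of_lt (by omega)] at h2
      exact h2
    subst hceq
    rw [mul_comm (d - 1) a₁] at hx
    have hF2y : d * F₂ = d * y := by omega
    have : F₂ = y := Nat.eq_of_mul_eq_mul_left hdpos hF2y
    exact hF₂.1 (this ▸ hy)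
  have hlow : d * F₂ + a₁ * (d - 1) ≤ F₁ := hF₁.2 hnot
  -- Step 2: F₁ ≤ d * F₂ + a₁ * (d - 1)
  have hnr : ¬ ∃ (l₀ : ℕ) (l : Fin n → ℕ), F₁ = l₀ * a₁ + ∑ i, l i * a i := hF₁.1
  set c : ℕ := ((F₁ : ZMod d) * (a₁ : ZMod d)⁻¹).val with hcdef
  have hc : c < d := ZMod.val_lt _
  have hcc : ((c * a₁ : ℕ) : ZMod d) = (F₁ : ZMod d) := by
    push_cast
    rw [hcdef, ZMod.natCast_val, ZMod.cast_id, mul_assoc,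
      ZMod.inv_mul_of_unit _ hu, mul_one]
  have hhigh : F₁ ≤ d * F₂ + a₁ * (d - 1) := by
    by_cases hlt : F₁ < c * a₁
    · have h1 : c * a₁ ≤ (d - 1) * a₁ := Nat.mul_le_mul_right _ (by omega)
      calc F₁ ≤ (d - 1) * a₁ := le_trans hlt.le h1
        _ = a₁ * (d - 1) := mul_comm _ _
        _ ≤ d * F₂ + a₁ * (d - 1) := Nat.le_add_left _ _
    · push_neg at hlt
      have hmod : c * a₁ ≡ F₁ [MOD d] := (ZMod.natCast_eq_natCast_iff _ _ _).mp hcc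
      have hdd : d ∣ F₁ - c * a₁ := (Nat.modEq_iff_dvd' hlt).mp hmod
      obtain ⟨y, hy⟩ := hdd
      have hxeq : F₁ = c * a₁ + d * y := by omega
      have hyn : ¬ ∃ (l₀ : ℕ) (l : Fin n → ℕ),
          y = l₀ * a₁ + ∑ i, l i * (a i / d) := fun h =>
        hnr ((key F₁).mpr ⟨c, hc, y, h, hxeq⟩)
      have hyF : y ≤ F₂ := hF₂.2 hyn
      calc F₁ = c * a₁ + d * y := hxeq
        _ ≤ (d - 1) * a₁ + d * F₂ :=
          Nat.add_le_add (Nat.mul_le_mul_right _ (by omega)) (Nat.mul_le_mul_left _ hyF)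
        _ = d * F₂ + a₁ * (d - 1) := by rw [mul_comm (d - 1) a₁]; omega
  omega
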